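/- Let u : [0, ∞) → ℝ be continuous and let c > 0. Then limsup_{s → ∞} ( u(s) + c ∫₀ˢ u(t)² dt ) ≥ 0. -/

import Mathlib

open Filter Set intervalIntegral MeasureTheory

/-- Guimaraes' lemma (limsup part): for `u` continuous on `[0, ∞)` and `c > 0`,
`limsup_{s → ∞} (u s + c ∫₀ˢ u t ^ 2 dt) ≥ 0`, the limsup taken in the extended reals. -/
theorem guimaraes_limsup_nonneg (u : ℝ → ℝ) (hu : ContinuousOn u (Set.Ici 0))
    (c : ℝ) (hc : 0 < c) :
    (0 : EReal) ≤
      Filter.limsup (fun s : ℝ => ((u s + c * ∫ t in (0:ℝ)..s, u t ^ 2 : ℝ) : EReal))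
        Filter.atTop := by
  by_contra hlt
  push_neg at hlt
  obtain ⟨r, hLr, hr0⟩ := EReal.exists_between_coe_real hlt
  have hr : r < 0 := by exact_mod_cast hr0
  have hev := Filter.eventually_lt_of_limsup_lt hLr
  rw [Filter.eventually_atTop] at hev
  obtain ⟨a, ha⟩ := hev
  set s₀ : ℝ := max a 1 with hs₀def
  have hs₀1 : (1:ℝ) ≤ s₀ := le_max_right _ _
  have hs₀0 : (0:ℝ) < s₀ := lt_of_lt_of_le one_pos hs₀1
  set ε : ℝ := -r with hεdef
  have hε : 0 < ε := by simp [hεdef]; linarith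
  set F : ℝ → ℝ := fun s => ∫ t in (0:ℝ)..s, u t ^ 2 with hF
  have hcontsq : ContinuousOn (fun t => u t ^ 2) (Ici 0) := hu.pow 2
  have hint : ∀ s : ℝ, 0 ≤ s → IntervalIntegrable (fun t => u t ^ 2) volume 0 s := by
    intro s hs
    apply ContinuousOn.intervalIntegrable
    apply hcontsq.mono
    rw [uIcc_of_le hs]
    exact Icc_subset_Ici_self
  have hFnonneg : ∀ s : ℝ, 0 ≤ s → 0 ≤ F s := fun s hs =>
    intervalIntegral.integral_nonneg hs (fun x _ => sq_nonneg _)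
  have hFderiv : ∀ x : ℝ, s₀ ≤ x → HasDerivAt F (u x ^ 2) x := by
    intro x hx
    have hx0 : (0:ℝ) < x := lt_of_lt_of_le hs₀0 hx
    have hca : ContinuousAt (fun t => u t ^ 2) x :=
      hcontsq.continuousAt (Ici_mem_nhds hx0)
    have hmeas : StronglyMeasurableAtFilter (fun t => u t ^ 2) (nhds x) volume :=
      (hcontsq.mono (Ioi_subset_Ici le_rfl)).stronglyMeasurableAtFilter isOpen_Ioi x hx0
    exact intervalIntegral.integral_hasDerivAt_right (hint x hx0.le) hmeas hca
  -- bound: for s ≥ s₀, u s < -(c * F s + ε)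
  set f : ℝ → ℝ := fun s => c * F s + ε with hf
  have hfpos : ∀ s : ℝ, 0 ≤ s → 0 < f s := by
    intro s hs
    have := hFnonneg s hs
    have : 0 ≤ c * F s := mul_nonneg hc.le this
    simp only [hf]; linarith
  have hub : ∀ s : ℝ, s₀ ≤ s → u s ≤ -f s := by
    intro s hs
    have h1 := ha s (le_trans (le_max_left a 1) hs)
    have h2 : u s + c * F s < r := by exact_mod_cast h1
    simp only [hf, hεdef]; linarith
  have hsq : ∀ s : ℝ, s₀ ≤ s → f s ^ 2 ≤ u s ^ 2 := by
    intro s hs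
    have h1 := hub s hs
    have h2 := hfpos s (le_trans hs₀0.le hs)
    nlinarith
  -- h := (f ·)⁻¹ + c * ·  is antitone on Ici s₀
  set h : ℝ → ℝ := fun s => (f s)⁻¹ + c * s with hh
  have hhderiv : ∀ x : ℝ, s₀ ≤ x → HasDerivAt h (-(c * u x ^ 2) / f x ^ 2 + c) x := by
    intro x hx
    have hfd : HasDerivAt f (c * u x ^ 2) x := ((hFderiv x hx).const_mul c).add_const ε
    have hfne : f x ≠ 0 := (hfpos x (le_trans hs₀0.le hx)).ne'
    have hinv : HasDerivAt (fun s => (f s)⁻¹) (-(c * u x ^ 2) / f x ^ 2) x := hfd.inv hfne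
    exact (hinv.add ((hasDerivAt_id x).const_mul c)).congr_deriv (by ring)
  have hanti : AntitoneOn h (Ici s₀) := by
    apply antitoneOn_of_deriv_nonpos (convex_Ici s₀)
    · exact fun x hx => ((hhderiv x hx).continuousAt).continuousWithinAt
    · intro x hx
      rw [interior_Ici] at hx
      exact ((hhderiv x hx.le).differentiableAt).differentiableWithinAt
    · intro x hx
      rw [interior_Ici] at hx
      rw [((hhderiv x hx.le).deriv)]
      have hfx := hfpos x (le_trans hs₀0.le hx.le)
      have hsqx := hsq x hx.le
      have h1 : c * f x ^ 2 ≤ c * u x ^ 2 := by nlinarith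
      have h2 : c ≤ c * u x ^ 2 / f x ^ 2 := by
        rw [le_div_iff₀ (by positivity)]
        nlinarith
      have : -(c * u x ^ 2) / f x ^ 2 = -(c * u x ^ 2 / f x ^ 2) := by ring
      rw [this]; linarith
  -- derive contradiction
  set s₁ : ℝ := s₀ + (f s₀)⁻¹ / c with hs₁
  have hfs₀ : 0 < f s₀ := hfpos s₀ hs₀0.le
  have hle : s₀ ≤ s₁ := by
    have : 0 < (f s₀)⁻¹ / c := by positivity
    simp only [hs₁]; linarith
  have hmono := hanti (self_mem_Ici) (mem_Ici.mpr hle) hle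
  have hfs₁ : 0 < f s₁ := hfpos s₁ (le_trans hs₀0.le hle)
  have hinv₁ : 0 < (f s₁)⁻¹ := by positivity
  simp only [hh, hs₁] at hmono
  have hcne : c ≠ 0 := hc.ne'
  have : c * (s₀ + (f s₀)⁻¹ / c) = c * s₀ + (f s₀)⁻¹ := by field_simp
  rw [this] at hmono
  linarith
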